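/- Let n ≥ 1 and let Q be a symmetric n×n real matrix with non-negative entries and zeros on the diagonal. Set a := min over y ∈ {−1,1}ⁿ of yᵀQy and b := max over y ∈ {−1,1}ⁿ of yᵀQy. Then for x ∈ {−1,1}ⁿ, the function θ ↦ (θ/2)·xᵀQx − log( Σ over y ∈ {−1,1}ⁿ of exp((θ/2)·yᵀQy) ) attains its supremum over ℝ at a unique point (i.e., the maximum likelihood estimator exists) if and only if a < xᵀQx < b. -/
import Mathlib

open Finset Real Filter

private lemma sum_exp_pos' {ι : Type*} [Fintype ι] [Nonempty ι] (g : ι → ℝ) :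
    0 < ∑ y : ι, Real.exp (g y) :=
  Finset.sum_pos (fun y _ => Real.exp_pos _) Finset.univ_nonempty

private lemma step_lt {ι : Type*} [Fintype ι] [Nonempty ι] (q : ι → ℝ) (c θ₀ θ₁ : ℝ)
    (hle : ∀ y, (θ₁ - θ₀) / 2 * q y ≤ (θ₁ - θ₀) / 2 * c)
    (y₀ : ι) (hlt : (θ₁ - θ₀) / 2 * q y₀ < (θ₁ - θ₀) / 2 * c) :
    θ₀ / 2 * c - Real.log (∑ y : ι, Real.exp (θ₀ / 2 * q y)) <
    θ₁ / 2 * c - Real.log (∑ y : ι, Real.exp (θ₁ / 2 * q y)) := by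
  have h1 : ∑ y : ι, Real.exp (θ₁ / 2 * q y)
      < Real.exp ((θ₁ - θ₀) / 2 * c) * ∑ y : ι, Real.exp (θ₀ / 2 * q y) := by
    rw [Finset.mul_sum]
    refine Finset.sum_lt_sum (fun y _ => ?_) ⟨y₀, Finset.mem_univ y₀, ?_⟩
    · rw [← Real.exp_add]
      exact Real.exp_le_exp.2 (by nlinarith [hle y])
    · rw [← Real.exp_add]
      exact Real.exp_lt_exp.2 (by nlinarith)
  have h2 := Real.log_lt_log (sum_exp_pos' _) h1
  rw [Real.log_mul (Real.exp_ne_zero _) (ne_of_gt (sum_exp_pos' _)), Real.log_exp] at h2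
  linarith

private lemma midpoint_lt {ι : Type*} [Fintype ι] [Nonempty ι] (q : ι → ℝ) (s t : ℝ)
    (y z : ι) (hne : s / 4 * q y + t / 4 * q z ≠ s / 4 * q z + t / 4 * q y) :
    Real.log (∑ w : ι, Real.exp ((s + t) / 2 / 2 * q w)) <
      (Real.log (∑ w : ι, Real.exp (s / 2 * q w)) +
        Real.log (∑ w : ι, Real.exp (t / 2 * q w))) / 2 := by
  set u : ι → ℝ := fun w => Real.exp (s / 4 * q w) with hu
  set v : ι → ℝ := fun w => Real.exp (t / 4 * q w) with hv
  have hA : (∑ w : ι, Real.exp ((s + t) / 2 / 2 * q w)) = ∑ w : ι, u w * v w := by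
    refine Finset.sum_congr rfl fun w _ => ?_
    rw [hu, hv]; dsimp only
    rw [← Real.exp_add]
    congr 1; ring
  have hB : (∑ w : ι, Real.exp (s / 2 * q w)) = ∑ w : ι, (u w) ^ 2 := by
    refine Finset.sum_congr rfl fun w _ => ?_
    rw [hu]; dsimp only
    rw [← Real.exp_nat_mul]
    congr 1; push_cast; ring
  have hC : (∑ w : ι, Real.exp (t / 2 * q w)) = ∑ w : ι, (v w) ^ 2 := by
    refine Finset.sum_congr rfl fun w _ => ?_
    rw [hv]; dsimp only
    rw [← Real.exp_nat_mul]
    congr 1; push_cast; ring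
  set A := ∑ w : ι, u w * v w with hAd
  set B := ∑ w : ι, (u w) ^ 2 with hBd
  set C := ∑ w : ι, (v w) ^ 2 with hCd
  have hApos : 0 < A := Finset.sum_pos (fun w _ => mul_pos (Real.exp_pos _) (Real.exp_pos _))
    Finset.univ_nonempty
  have hBpos : 0 < B := Finset.sum_pos (fun w _ => pow_pos (Real.exp_pos _) 2)
    Finset.univ_nonempty
  have hCpos : 0 < C := Finset.sum_pos (fun w _ => pow_pos (Real.exp_pos _) 2)
    Finset.univ_nonempty
  -- strict Cauchy-Schwarz via Lagrange-type argument
  have hA2 : A * A = ∑ w : ι, ∑ w' : ι, (u w * v w) * (u w' * v w') := by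
    rw [hAd, Finset.sum_mul_sum]
  have hBC : B * C = ∑ w : ι, ∑ w' : ι, (u w) ^ 2 * (v w') ^ 2 := by
    rw [hBd, hCd, Finset.sum_mul_sum]
  have hswap : (∑ w : ι, ∑ w' : ι, (u w) ^ 2 * (v w') ^ 2)
      = ∑ w : ι, ∑ w' : ι, (u w') ^ 2 * (v w) ^ 2 := Finset.sum_comm
  have key : 2 * (B * C) - 2 * (A * A)
      = ∑ w : ι, ∑ w' : ι, (u w * v w' - u w' * v w) ^ 2 := by
    rw [hA2, hBC, two_mul, two_mul]
    nth_rewrite 2 [hswap]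
    rw [← Finset.sum_add_distrib, ← Finset.sum_add_distrib, ← Finset.sum_sub_distrib]
    refine Finset.sum_congr rfl fun w _ => ?_
    rw [← Finset.sum_add_distrib, ← Finset.sum_add_distrib, ← Finset.sum_sub_distrib]
    exact Finset.sum_congr rfl fun w' _ => by ring
  have hne2 : u y * v z ≠ u z * v y := by
    rw [hu, hv]; dsimp only
    rw [← Real.exp_add, ← Real.exp_add]
    simp only [ne_eq, Real.exp_eq_exp]
    exact hne
  have hterm : 0 < (u y * v z - u z * v y) ^ 2 := by
    have h0 := sub_ne_zero.2 hne2
    positivity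
  have hsum_pos : 0 < ∑ w : ι, ∑ w' : ι, (u w * v w' - u w' * v w) ^ 2 := by
    refine Finset.sum_pos' (fun w _ => Finset.sum_nonneg fun w' _ => sq_nonneg _)
      ⟨y, Finset.mem_univ y, Finset.sum_pos' (fun w' _ => sq_nonneg _)
        ⟨z, Finset.mem_univ z, hterm⟩⟩
  have hAABC : A * A < B * C := by linarith [key ▸ hsum_pos]
  have hlog := Real.log_lt_log (mul_pos hApos hApos) hAABC
  rw [Real.log_mul hApos.ne' hApos.ne', Real.log_mul hBpos.ne' hCpos.ne'] at hlog
  rw [hA, hB, hC]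
  linarith

noncomputable def spin (b : Bool) : ℝ := if b then 1 else -1

noncomputable def qf {n : ℕ} (Q : Matrix (Fin n) (Fin n) ℝ) (v : Fin n → ℝ) : ℝ :=
  ∑ i, ∑ j, v i * Q i j * v j

set_option maxHeartbeats 1000000 in
theorem stmt4 (n : ℕ) (hn : 1 ≤ n) (Q : Matrix (Fin n) (Fin n) ℝ)
    (hsym : Q.IsSymm) (hpos : ∀ i j, 0 ≤ Q i j) (hdiag : ∀ i, Q i i = 0)
    (x : Fin n → ℝ) (hx : ∀ i, x i = 1 ∨ x i = -1) :
    (∃! θ₀ : ℝ, IsMaxOn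
        (fun θ : ℝ => θ / 2 * qf Q x -
          Real.log (∑ y : Fin n → Bool, Real.exp (θ / 2 * qf Q (fun i => spin (y i)))))
        Set.univ θ₀)
      ↔ (Finset.univ.inf' Finset.univ_nonempty
            (fun y : Fin n → Bool => qf Q (fun i => spin (y i))) < qf Q x ∧
          qf Q x < Finset.univ.sup' Finset.univ_nonempty
            (fun y : Fin n → Bool => qf Q (fun i => spin (y i)))) := by
  classical
  set q : (Fin n → Bool) → ℝ := fun y => qf Q (fun i => spin (y i)) with hq
  set c : ℝ := qf Q x with hcdef
  set a : ℝ := Finset.univ.inf' Finset.univ_nonempty q with hadef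
  set b : ℝ := Finset.univ.sup' Finset.univ_nonempty q with hbdef
  set f : ℝ → ℝ :=
    fun θ : ℝ => θ / 2 * c - Real.log (∑ y : Fin n → Bool, Real.exp (θ / 2 * q y)) with hf
  show (∃! θ₀ : ℝ, IsMaxOn f Set.univ θ₀) ↔ (a < c ∧ c < b)
  obtain ⟨ya, -, hya⟩ := Finset.exists_mem_eq_inf' (Finset.univ_nonempty) q
  obtain ⟨yb, -, hyb⟩ := Finset.exists_mem_eq_sup' (Finset.univ_nonempty) q
  have hya' : q ya = a := hya.symm
  have hyb' : q yb = b := hyb.symm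
  have hxs : (fun i => spin (decide (x i = 1))) = x := by
    funext i
    rcases hx i with h | h
    · simp [spin, h]
    · simp [spin, h]
      intro h2
      norm_num at h2
  have hcx : q (fun i => decide (x i = 1)) = c := by
    rw [hq, hcdef]
    dsimp only
    rw [hxs]
  have hqa : ∀ y, a ≤ q y := fun y => Finset.inf'_le q (Finset.mem_univ y)
  have hqb : ∀ y, q y ≤ b := fun y => Finset.le_sup' q (Finset.mem_univ y)
  have hac : a ≤ c := hcx ▸ hqa _
  have hcb : c ≤ b := hcx ▸ hqb _
  constructor
  · rintro ⟨θ₀, hmax, huniq⟩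
    by_contra hcon
    rw [not_and_or, not_lt, not_lt] at hcon
    by_cases hab : a = b
    · -- all values equal, f is constant, uniqueness fails
      have hca : c = a := le_antisymm (hab ▸ hcb) hac
      have hqc : ∀ y, q y = c := fun y => le_antisymm (hca ▸ hab ▸ hqb y) (hca ▸ hqa y)
      have hconst : ∀ θ : ℝ, f θ = - Real.log (Fintype.card (Fin n → Bool)) := by
        intro θ
        have hs : (∑ y : Fin n → Bool, Real.exp (θ / 2 * q y))
            = (Fintype.card (Fin n → Bool) : ℝ) * Real.exp (θ / 2 * c) := by
          rw [Finset.sum_congr rfl fun y _ => by rw [hqc y]]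
          simp [Finset.sum_const, nsmul_eq_mul, Finset.card_univ]
        rw [hf]
        dsimp only
        rw [hs, Real.log_mul (by positivity) (Real.exp_ne_zero _), Real.log_exp]
        ring
      have hm : ∀ θ : ℝ, IsMaxOn f Set.univ θ := fun θ =>
        isMaxOn_iff.2 fun θ' _ => le_of_eq (by rw [hconst θ', hconst θ])
      have h0 := huniq 0 (hm 0)
      have h1 := huniq 1 (hm 1)
      rw [← h0] at h1
      norm_num at h1
    · have hab' : a < b := lt_of_le_of_ne (hya' ▸ hqb ya) hab
      rcases hcon with hca | hbc
      · -- c = a, f strictly decreasing, no maximum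
        have hceq : c = a := le_antisymm hca hac
        have hlt : f θ₀ < f (θ₀ - 1) := by
          refine step_lt q c θ₀ (θ₀ - 1) (fun y => ?_) yb ?_
          · have h1 := hqa y
            nlinarith [hqa y, hceq]
          · rw [hyb']
            nlinarith [hceq, hab']
        exact absurd (isMaxOn_iff.1 hmax (θ₀ - 1) (Set.mem_univ _)) (not_le.2 hlt)
      · -- c = b, f strictly increasing, no maximum
        have hceq : c = b := le_antisymm hcb hbc
        have hlt : f θ₀ < f (θ₀ + 1) := by
          refine step_lt q c θ₀ (θ₀ + 1) (fun y => ?_) ya ?_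
          · nlinarith [hqb y, hceq]
          · rw [hya']
            nlinarith [hceq, hab']
        exact absurd (isMaxOn_iff.1 hmax (θ₀ + 1) (Set.mem_univ _)) (not_le.2 hlt)
  · rintro ⟨h1, h2⟩
    have hab : a < b := lt_trans h1 h2
    have hcont : Continuous f := by
      rw [hf]
      refine Continuous.sub ((continuous_id.div_const 2).mul continuous_const) ?_
      refine Continuous.log ?_ fun θ => ne_of_gt (sum_exp_pos' _)
      exact continuous_finset_sum _ fun y _ =>
        Real.continuous_exp.comp ((continuous_id.div_const 2).mul continuous_const)
    have hub : ∀ θ : ℝ, f θ ≤ θ * ((c - b) / 2) := by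
      intro θ
      have hσ : Real.exp (θ / 2 * q yb) ≤ ∑ y : Fin n → Bool, Real.exp (θ / 2 * q y) :=
        Finset.single_le_sum (f := fun y : Fin n → Bool => Real.exp (θ / 2 * q y))
          (fun y _ => (Real.exp_pos _).le) (Finset.mem_univ yb)
      have hl := Real.log_le_log (Real.exp_pos _) hσ
      rw [Real.log_exp, hyb'] at hl
      rw [hf]
      dsimp only
      have e : θ * ((c - b) / 2) = θ / 2 * c - θ / 2 * b := by ring
      rw [e]
      linarith
    have hlb : ∀ θ : ℝ, f θ ≤ θ * ((c - a) / 2) := by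
      intro θ
      have hσ : Real.exp (θ / 2 * q ya) ≤ ∑ y : Fin n → Bool, Real.exp (θ / 2 * q y) :=
        Finset.single_le_sum (f := fun y : Fin n → Bool => Real.exp (θ / 2 * q y))
          (fun y _ => (Real.exp_pos _).le) (Finset.mem_univ ya)
      have hl := Real.log_le_log (Real.exp_pos _) hσ
      rw [Real.log_exp, hya'] at hl
      rw [hf]
      dsimp only
      have e : θ * ((c - a) / 2) = θ / 2 * c - θ / 2 * a := by ring
      rw [e]
      linarith
    have ht1 : Tendsto (fun θ : ℝ => θ * ((c - b) / 2)) atTop atBot :=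
      tendsto_id.atTop_mul_const_of_neg (by linarith)
    have ht2 : Tendsto (fun θ : ℝ => θ * ((c - a) / 2)) atBot atBot :=
      tendsto_id.atBot_mul_const (by linarith)
    have hT : Tendsto f (cocompact ℝ) atBot := by
      rw [cocompact_eq_atBot_atTop, tendsto_sup]
      exact ⟨tendsto_atBot_mono hlb ht2, tendsto_atBot_mono hub ht1⟩
    obtain ⟨θ₀, hθ₀⟩ := hcont.exists_forall_ge hT
    refine ⟨θ₀, isMaxOn_iff.2 fun θ _ => hθ₀ θ, fun θ₁ hmax1 => ?_⟩
    by_contra hne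
    have e1 : f θ₀ ≤ f θ₁ := isMaxOn_iff.1 hmax1 θ₀ (Set.mem_univ _)
    have e2 : f θ₁ ≤ f θ₀ := hθ₀ θ₁
    have hside : θ₁ / 4 * q ya + θ₀ / 4 * q yb ≠ θ₁ / 4 * q yb + θ₀ / 4 * q ya := by
      intro h
      have h4 : (θ₁ - θ₀) * (q ya - q yb) = 0 := by linear_combination 4 * h
      rcases mul_eq_zero.1 h4 with h5 | h5
      · exact hne (by linarith [sub_eq_zero.1 h5])
      · rw [hya', hyb'] at h5
        exact absurd (sub_eq_zero.1 h5) (ne_of_lt hab)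
    have hmid := midpoint_lt q θ₁ θ₀ ya yb hside
    have hfm : f ((θ₁ + θ₀) / 2) ≤ f θ₀ := hθ₀ _
    rw [hf] at e1 e2 hfm
    dsimp only at e1 e2 hfm
    have hr : (θ₁ + θ₀) / 2 / 2 * c = (θ₁ / 2 * c + θ₀ / 2 * c) / 2 := by ring
    rw [hr] at hfm
    linarith
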